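/- For all r, q ∈ ℕ and all n ∈ ℤ, the limit lim_{x→∞} (1/x) ∑_{h ≤ x} c_r(h+n) c_q(h) exists and equals c_q(n) if r = q, and equals 0 if r ≠ q. -/

import Mathlib

open Finset

/-- The Ramanujan sum `c_q(n) = ∑_{1 ≤ j ≤ q, gcd(j,q)=1} exp(2πi j n / q)`. -/
noncomputable def cq (q : ℕ) (n : ℤ) : ℂ :=
  ∑ j ∈ (Finset.Icc 1 q).filter (fun j => Nat.Coprime j q),
    Complex.exp (2 * Real.pi * Complex.I * j * n / q)

/-- The incomplete von Mangoldt function `Λ_N(n) = -∑_{d ≤ N, d ∣ n} μ(d) log d`. -/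
noncomputable def LamN (N n : ℕ) : ℝ :=
  -∑ d ∈ (Finset.Icc 1 N).filter (fun d => d ∣ n),
    (ArithmeticFunction.moebius d : ℝ) * Real.log d

/-- The correlation `C_{Λ,Λ_N}(N, n) = ∑_{m ≤ N} Λ(m) Λ_N(m + n)`. -/
noncomputable def corr (N n : ℕ) : ℝ :=
  ∑ m ∈ Finset.Icc 1 N, ArithmeticFunction.vonMangoldt m * LamN N (m + n)

/-- The Ramanujan coefficient `Λ̂_N(q) = -(μ(q)/q) ∑_{d ≤ N/q, gcd(d,q)=1} μ(d) log(dq)/d`. -/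
noncomputable def LamHat (N q : ℕ) : ℝ :=
  -((ArithmeticFunction.moebius q : ℝ) / q) *
    ∑ d ∈ (Finset.Icc 1 (N / q)).filter (fun d => Nat.Coprime d q),
      (ArithmeticFunction.moebius d : ℝ) * Real.log (d * q) / d

/-- `ℤ_q^* = {m ∈ ℕ ∩ [1,q] : gcd(m,q) = 1}`. -/
def Zstar (q : ℕ) : Finset ℕ := (Finset.Icc 1 q).filter (fun m => Nat.Coprime m q)

/-- `ψ(N; q, k) = ∑_{n ≤ N, n ≡ k (mod q)} Λ(n)`. -/
noncomputable def psi (N q k : ℕ) : ℝ :=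
  ∑ n ∈ (Finset.Icc 1 N).filter (fun n => n % q = k % q),
    ArithmeticFunction.vonMangoldt n

/-- `δ(h; q, k) = c_q(k+h) - (μ(q)/φ(q)) c_q(h)`. -/
noncomputable def dev (h q k : ℕ) : ℂ :=
  cq q ((k : ℤ) + h) - (ArithmeticFunction.moebius q : ℂ) / (Nat.totient q : ℂ) * cq q h

/-- `Δ(N, h) = ∑_{q ≤ N} Λ̂_N(q) ∑_{k ∈ ℤ_q^*} ψ(N;q,k) δ(h;q,k)`. -/
noncomputable def Delta (N h : ℕ) : ℂ :=
  ∑ q ∈ Finset.Icc 1 N, (LamHat N q : ℂ) *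
    ∑ k ∈ Zstar q, (psi N q k : ℂ) * dev h q k

/-- `S_N(q, k; r) = ∑_{n ≤ N, n ≡ k (mod q)} c_r(n)`. -/
noncomputable def SN (N q : ℕ) (k : ℤ) (r : ℕ) : ℂ :=
  ∑ n ∈ (Finset.Icc 1 N).filter (fun n : ℕ => (n : ℤ) % (q : ℤ) = k % (q : ℤ)), cq r n

open Filter Complex

lemma avg_pow_tendsto (c : ℂ) (hc : ‖c‖ = 1) :
    Tendsto (fun x : ℝ => ((1/x : ℝ) : ℂ) * ∑ h ∈ Icc 1 ⌊x⌋₊, c ^ h)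
      atTop (nhds (if c = 1 then 1 else 0)) := by
  by_cases h1 : c = 1
  · simp only [h1, if_pos, one_pow, Finset.sum_const, Nat.card_Icc, smul_eq_mul, mul_one]
    have h2 : Tendsto (fun x : ℝ => ((⌊x⌋₊ : ℝ) / x : ℝ)) atTop (nhds 1) :=
      tendsto_nat_floor_div_atTop
    have h3 := (Complex.continuous_ofReal.tendsto 1).comp h2
    rw [Complex.ofReal_one] at h3
    refine h3.congr (fun x => ?_)
    simp [Function.comp]
    push_cast
    ring
  · rw [if_neg h1]
    have hc1 : c - 1 ≠ 0 := sub_ne_zero.mpr h1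
    have hM : ∀ N : ℕ, ‖∑ h ∈ Icc 1 N, c ^ h‖ ≤ 2 / ‖c - 1‖ := by
      intro N
      have hIcc : ∑ h ∈ Icc 1 N, c ^ h = c * ((c ^ N - 1) / (c - 1)) := by
        have : Icc 1 N = Ico 1 (N + 1) := by rw [Finset.Ico_add_one_right_eq_Icc]
        rw [this, Finset.sum_Ico_eq_sum_range]
        simp only [Nat.add_sub_cancel, pow_add, pow_one]
        rw [← Finset.mul_sum, geom_sum_eq h1]
      rw [hIcc, norm_mul, hc, one_mul, norm_div]
      gcongr
      calc ‖c ^ N - 1‖ ≤ ‖c ^ N‖ + ‖(1:ℂ)‖ := by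
            simpa using norm_sub_le (c^N) (1:ℂ)
        _ ≤ 2 := by rw [norm_pow, hc, one_pow, norm_one]; norm_num
    have hb : Tendsto (fun x : ℝ => |1/x| * (2 / ‖c - 1‖)) atTop (nhds 0) := by
      have : Tendsto (fun x : ℝ => |1/x|) atTop (nhds 0) := by
        have := tendsto_inv_atTop_zero (𝕜 := ℝ)
        simpa using (this.abs.congr (fun x => by simp [one_div]))
      simpa using this.mul_const (2 / ‖c - 1‖)
    refine squeeze_zero_norm (fun x => ?_) hb
    rw [norm_mul]
    gcongr
    · rw [Complex.norm_real]; simp [abs_inv]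
    · exact hM _

lemma exp_eq_one_iff_dvd (r q j j' : ℕ) (hr : 0 < r) (hq : 0 < q) :
    Complex.exp (((2*Real.pi*j/r + 2*Real.pi*j'/q : ℝ) : ℂ) * Complex.I) = 1 ↔
      ((r : ℤ) * q) ∣ ((j : ℤ) * q + (j' : ℤ) * r) := by
  have hr' : (r : ℝ) ≠ 0 := Nat.cast_ne_zero.mpr hr.ne'
  have hq' : (q : ℝ) ≠ 0 := Nat.cast_ne_zero.mpr hq.ne'
  have hpi := Real.pi_ne_zero
  rw [Complex.exp_eq_one_iff]
  constructor
  · rintro ⟨k, hk⟩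
    refine ⟨k, ?_⟩
    have h2 : ((2*Real.pi*j/r + 2*Real.pi*j'/q : ℝ) : ℂ) = (k : ℂ) * (2 * Real.pi) := by
      apply mul_right_cancel₀ Complex.I_ne_zero
      rw [hk]; ring
    have h3 : (2*Real.pi*j/r + 2*Real.pi*j'/q : ℝ) = (k : ℝ) * (2 * Real.pi) := by
      exact_mod_cast h2
    have h4 : (j : ℝ) * q + (j' : ℝ) * r = (r : ℝ) * q * k := by
      have h2pi : (2*Real.pi) ≠ 0 := by positivity
      apply mul_left_cancel₀ h2pi
      field_simp at h3
      linear_combination (2*Real.pi)*h3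
    exact_mod_cast h4
  · rintro ⟨k, hk⟩
    refine ⟨k, ?_⟩
    have h4 : (j : ℝ) * q + (j' : ℝ) * r = (r : ℝ) * q * k := by exact_mod_cast hk
    have h3 : (2*Real.pi*j/r + 2*Real.pi*j'/q : ℝ) = (k : ℝ) * (2 * Real.pi) := by
      field_simp
      linear_combination h4
    rw [h3]
    push_cast
    ring

/-- orthogonality of Ramanujan sums:
`lim_{x→∞} (1/x) ∑_{h ≤ x} c_r(h+n) c_q(h)` equals `c_q(n)` if `r = q`, else `0`. -/

theorem stmt5 (r q : ℕ) (hr : 1 ≤ r) (hq : 1 ≤ q) (n : ℤ) :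
    Filter.Tendsto
      (fun x : ℝ => (1 / x) * ∑ h ∈ Finset.Icc 1 ⌊x⌋₊, cq r ((h : ℤ) + n) * cq q (h : ℤ))
      Filter.atTop (nhds (if r = q then cq q n else 0)) := by
  have hr' : (r : ℝ) ≠ 0 := Nat.cast_ne_zero.mpr (by omega)
  have hq' : (q : ℝ) ≠ 0 := Nat.cast_ne_zero.mpr (by omega)
  set A := (Finset.Icc 1 r).filter (fun j => Nat.Coprime j r) with hA
  set B := (Finset.Icc 1 q).filter (fun j => Nat.Coprime j q) with hB
  set a : ℕ → ℂ := fun j => Complex.exp (2 * Real.pi * Complex.I * j * n / r) with ha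
  set c : ℕ → ℕ → ℂ :=
    fun j j' => Complex.exp (((2*Real.pi*j/r + 2*Real.pi*j'/q : ℝ) : ℂ) * Complex.I) with hc
  have key : ∀ h : ℕ, cq r ((h : ℤ) + n) * cq q (h : ℤ)
      = ∑ j ∈ A, ∑ j' ∈ B, a j * (c j j') ^ h := by
    intro h
    rw [cq, cq, Finset.sum_mul_sum]
    refine Finset.sum_congr rfl fun j _ => Finset.sum_congr rfl fun j' _ => ?_
    simp only [ha, hc]
    rw [← Complex.exp_nat_mul, ← Complex.exp_add, ← Complex.exp_add]
    congr 1
    have hπ : ((2*Real.pi*j/r + 2*Real.pi*j'/q : ℝ) : ℂ)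
        = 2*Real.pi*(j:ℂ)/r + 2*Real.pi*(j':ℂ)/q := by push_cast; ring
    rw [hπ]
    field_simp
    push_cast
    ring
  have swap : ∀ x : ℝ, ∑ h ∈ Finset.Icc 1 ⌊x⌋₊, cq r ((h : ℤ) + n) * cq q (h : ℤ)
      = ∑ j ∈ A, ∑ j' ∈ B, a j * ∑ h ∈ Finset.Icc 1 ⌊x⌋₊, (c j j') ^ h := by
    intro x
    simp_rw [key, Finset.mul_sum]
    rw [Finset.sum_comm]
    exact Finset.sum_congr rfl fun j _ => Finset.sum_comm
  have habs : ∀ j j', ‖c j j'‖ = 1 := by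
    intro j j'; rw [hc]; exact Complex.norm_exp_ofReal_mul_I _
  have T : Tendsto
      (fun x : ℝ => ∑ j ∈ A, ∑ j' ∈ B,
        a j * (((1/x : ℝ) : ℂ) * ∑ h ∈ Finset.Icc 1 ⌊x⌋₊, (c j j') ^ h))
      atTop (nhds (∑ j ∈ A, ∑ j' ∈ B, a j * (if c j j' = 1 then 1 else 0))) := by
    refine tendsto_finset_sum _ fun j _ => tendsto_finset_sum _ fun j' _ => ?_
    exact (avg_pow_tendsto (c j j') (habs j j')).const_mul (a j)
  have Lval : (∑ j ∈ A, ∑ j' ∈ B, a j * (if c j j' = 1 then 1 else 0))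
      = if r = q then cq q n else 0 := by
    by_cases hrq : r = q
    · subst hrq
      rw [if_pos rfl]
      have inner : ∀ j ∈ A, (∑ j' ∈ A, a j * (if c j j' = 1 then (1:ℂ) else 0)) = a j := by
        intro j hj
        simp only [hA, Finset.mem_filter, Finset.mem_Icc] at hj
        obtain ⟨⟨hj1, hj2⟩, hjc⟩ := hj
        have hcond : ∀ j' ∈ A, (c j j' = 1 ↔ j' = r - j % r) := by
          intro j' hj'
          simp only [hA, Finset.mem_filter, Finset.mem_Icc] at hj'
          obtain ⟨⟨hj'1, hj'2⟩, hj'c⟩ := hj'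
          simp only [hc]
          rw [exp_eq_one_iff_dvd r r j j' hr hr]
          have h1 : ((r:ℤ)*r) ∣ ((j:ℤ)*r + (j':ℤ)*r) ↔ (r:ℤ) ∣ ((j:ℤ) + j') := by
            have h2 : (j:ℤ)*r + (j':ℤ)*r = ((j:ℤ) + j')*r := by ring
            rw [h2]
            exact mul_dvd_mul_iff_right (by exact_mod_cast (show r ≠ 0 by omega))
          rw [h1, ← Nat.cast_add, Int.natCast_dvd_natCast]
          rcases eq_or_lt_of_le hr with h1' | h2'
          · have hr1 : r = 1 := h1'.symm
            subst hr1
            simp only [Nat.mod_one]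
            omega
          · have hjne : j ≠ r := by
              intro hh
              subst hh
              rw [Nat.Coprime, Nat.gcd_self] at hjc
              omega
            have hj'ne : j' ≠ r := by
              intro hh
              subst hh
              rw [Nat.Coprime, Nat.gcd_self] at hj'c
              omega
            have hjlt : j < r := by omega
            have hj'lt : j' < r := by omega
            rw [Nat.mod_eq_of_lt hjlt]
            constructor
            · intro hd
              have hle : r ≤ j + j' := Nat.le_of_dvd (by omega) hd
              obtain ⟨k, hk⟩ := hd
              have hk1 : k = 1 := by nlinarith
              rw [hk1, mul_one] at hk
              omega
            · intro hh
              subst hh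
              have h3 : j + (r - j) = r := by omega
              rw [h3]
        have hmem : r - j % r ∈ A := by
          simp only [hA, Finset.mem_filter, Finset.mem_Icc]
          rcases eq_or_lt_of_le hr with h1' | h2'
          · have hr1 : r = 1 := h1'.symm
            subst hr1
            simp [Nat.mod_one]
          · have hjne : j ≠ r := by
              intro hh
              subst hh
              rw [Nat.Coprime, Nat.gcd_self] at hjc
              omega
            have hjlt : j < r := by omega
            rw [Nat.mod_eq_of_lt hjlt]
            refine ⟨⟨by omega, by omega⟩, ?_⟩
            rw [Nat.Coprime, Nat.gcd_self_sub_left (le_of_lt hjlt)]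
            exact hjc
        rw [Finset.sum_congr rfl (fun j' hj' => by
          rw [mul_ite, mul_one, mul_zero, if_congr (hcond j' hj') rfl rfl])]
        rw [Finset.sum_ite_eq' A (r - j % r) (fun _ => a j), if_pos hmem]
      rw [Finset.sum_congr rfl inner]
      rfl
    · rw [if_neg hrq]
      refine Finset.sum_eq_zero fun j hj => Finset.sum_eq_zero fun j' hj' => ?_
      simp only [hA, Finset.mem_filter, Finset.mem_Icc] at hj
      simp only [hB, Finset.mem_filter, Finset.mem_Icc] at hj'
      have hcne : c j j' ≠ 1 := by
        intro hone
        simp only [hc] at hone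
        rw [exp_eq_one_iff_dvd r q j j' hr hq] at hone
        have hrdvd : r ∣ q := by
          have h1 : (r:ℤ) ∣ ((j:ℤ)*q + (j':ℤ)*r) := dvd_trans (Dvd.intro q rfl) hone
          have h2 : (r:ℤ) ∣ (j:ℤ)*q := by
            have h3 := h1.sub (dvd_mul_left (r:ℤ) (j':ℤ))
            simpa using h3
          have h3 : r ∣ j*q := by exact_mod_cast h2
          exact Nat.Coprime.dvd_of_dvd_mul_left hj.2.symm h3
        have hqdvd : q ∣ r := by
          have h1 : (q:ℤ) ∣ ((j:ℤ)*q + (j':ℤ)*r) := dvd_trans (Dvd.intro_left r rfl) hone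
          have h2 : (q:ℤ) ∣ (j':ℤ)*r := by
            have h3 := h1.sub (dvd_mul_left (q:ℤ) (j:ℤ))
            simpa using h3
          have h3 : q ∣ j'*r := by exact_mod_cast h2
          exact Nat.Coprime.dvd_of_dvd_mul_left hj'.2.symm h3
        exact hrq (Nat.dvd_antisymm hrdvd hqdvd)
      rw [if_neg hcne, mul_zero]
  rw [← Lval]
  refine T.congr fun x => ?_
  rw [swap x, Finset.mul_sum]
  refine Finset.sum_congr rfl fun j _ => ?_
  rw [Finset.mul_sum]
  refine Finset.sum_congr rfl fun j' _ => ?_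
  push_cast
  ring
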